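/- For every m ≥ 3, the Laurent polynomial V' m is nonzero and maxdeg (V' m) > m; consequently V' m ≠ U^m, where U := -z - z⁻¹. (Hence for every m ≥ 3 there exist links satisfying properties (1)–(4) of the Main Theorem: link homotopically trivial, not link isotopically trivial, with all proper sublinks trivial and all Milnor invariants zero.) -/

import Mathlib

open LaurentPolynomial

noncomputable def U : LaurentPolynomial ℤ := -T 1 - T (-1)

noncomputable def Q3' : LaurentPolynomial ℤ :=
  -T 12 + T 10 + T 6 + 2 * T 4 + 2 * T 2 + 6 + 2 * T (-2) + 2 * T (-4) + T (-6)
    + T (-10) - T (-12)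

/-- The maximum exponent in the support of a Laurent polynomial. -/
noncomputable def maxdeg (p : LaurentPolynomial ℤ) : WithBot ℤ := p.coeff.support.max

/-- The minimum exponent in the support of a Laurent polynomial. -/
noncomputable def mindeg (p : LaurentPolynomial ℤ) : WithTop ℤ := p.coeff.support.min

/-- Coefficient of a Laurent polynomial, via the underlying finsupp. -/
noncomputable def co (p : LaurentPolynomial ℤ) (n : ℤ) : ℤ :=
  p.coeff n

lemma co_add (p q : LaurentPolynomial ℤ) (n : ℤ) : co (p + q) n = co p n + co q n := by
  simp [co]

lemma co_neg (p : LaurentPolynomial ℤ) (n : ℤ) : co (-p) n = -co p n := by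
  simp [co]

lemma co_sub (p q : LaurentPolynomial ℤ) (n : ℤ) : co (p - q) n = co p n - co q n := by
  rw [sub_eq_add_neg, co_add, co_neg, sub_eq_add_neg]

lemma co_zero (n : ℤ) : co 0 n = 0 := rfl

lemma co_mul_T (p : LaurentPolynomial ℤ) (a n : ℤ) : co (p * T a) n = co p (n - a) := by
  have h := AddMonoidAlgebra.coeff_mul_single_apply p (1 : ℤ) a n
  rw [mul_one] at h
  simpa [co, sub_eq_add_neg] using h

lemma co_T (a n : ℤ) : co (T a) n = if a = n then 1 else 0 := by
  show (Finsupp.single a 1 : ℤ →₀ ℤ) n = _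
  exact Finsupp.single_apply

lemma co_C (r : ℤ) (n : ℤ) : co (LaurentPolynomial.C r) n = if n = 0 then r else 0 := by
  show (Finsupp.single 0 r : ℤ →₀ ℤ) n = _
  rw [Finsupp.single_apply]
  simp [eq_comm]

lemma co_intCast (c : ℤ) (n : ℤ) : co ((c : LaurentPolynomial ℤ)) n = if n = 0 then c else 0 := by
  have : ((c : ℤ) : LaurentPolynomial ℤ) = LaurentPolynomial.C c := by
    simp [LaurentPolynomial.C]
  rw [this, co_C]

lemma co_one (n : ℤ) : co 1 n = if n = 0 then 1 else 0 := by
  have : (1 : LaurentPolynomial ℤ) = T 0 := (T_zero).symm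
  rw [this, co_T]
  simp [eq_comm]

lemma co_U (n : ℤ) : co U n = -co (T 1 : LaurentPolynomial ℤ) n - co (T (-1)) n := by
  rw [U, sub_eq_add_neg, co_add, co_neg, co_neg]; ring

lemma co_Upow_eq_zero : ∀ m : ℕ, ∀ n : ℤ, (m : ℤ) < n → co (U ^ m) n = 0 := by
  intro m
  induction m with
  | zero =>
    intro n hn
    rw [pow_zero, co_one]
    have : ¬ n = 0 := by omega
    simp [this]
  | succ m ih =>
    intro n hn
    have : U ^ (m + 1) = -(U ^ m * T 1) - U ^ m * T (-1) := by
      rw [pow_succ, U]; ring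
    rw [this, co_sub, co_neg, co_mul_T, co_mul_T]
    rw [ih (n - 1) (by push_cast; omega), ih (n - (-1)) (by push_cast; omega)]
    ring

lemma ne_of_co_ne {p q : LaurentPolynomial ℤ} {n : ℤ} (h : co p n ≠ co q n) : p ≠ q := by
  intro he; exact h (by rw [he])

lemma mem_support_of_co_ne {p : LaurentPolynomial ℤ} {n : ℤ} (h : co p n ≠ 0) :
    n ∈ p.coeff.support := Finsupp.mem_support_iff.mpr h

lemma co_Q3' (k : ℤ) : co Q3' k =
    (if (12:ℤ) = k then -1 else 0) + (if (10:ℤ) = k then 1 else 0) +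
    (if (6:ℤ) = k then 1 else 0) + (if (4:ℤ) = k then 2 else 0) +
    (if (2:ℤ) = k then 2 else 0) + (if (0:ℤ) = k then 6 else 0) +
    (if (-2:ℤ) = k then 2 else 0) + (if (-4:ℤ) = k then 2 else 0) +
    (if (-6:ℤ) = k then 1 else 0) + (if (-10:ℤ) = k then 1 else 0) -
    (if (-12:ℤ) = k then 1 else 0) := by
  have h6 : (6 : LaurentPolynomial ℤ) = ((6 : ℤ) : LaurentPolynomial ℤ) := by norm_num
  have h2 : (2 : LaurentPolynomial ℤ) = ((2 : ℤ) : LaurentPolynomial ℤ) := by norm_num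
  rw [Q3', h6, h2]
  have hif : ∀ a c : ℤ, (if k - a = 0 then c else 0) = (if a = k then c else 0) := by
    intro a c; split_ifs <;> omega
  have hif0 : (if k = 0 then (6:ℤ) else 0) = (if (0:ℤ) = k then 6 else 0) := by
    split_ifs <;> omega
  have negif : ∀ P : Prop, ∀ _ : Decidable P,
      (-if P then (1:ℤ) else 0) = if P then (-1:ℤ) else 0 := by
    intro P hP; split_ifs <;> ring
  simp only [co_sub, co_add, co_neg, co_mul_T, co_T, co_intCast]
  rw [hif 4, hif 2, hif (-2), hif (-4), hif0, negif]

/-- For every `m ≥ 3`, `maxdeg (V' m) > m`, hence `V' m` differs from the Jones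
polynomial of the `m`-component unlink. -/
theorem V'_ne_unlink (V' : ℕ → LaurentPolynomial ℤ) (hV3 : V' 3 = Q3')
    (hVrec : ∀ m : ℕ, 3 ≤ m → V' (m + 1) =
      V' m * (T 5 - T 3 - T (-3) + T (-5)) -
        U ^ (m + 1) * (T 5 - T 3 - T 1 + T (-1) - T (-3) + T (-5))) :
    ∀ m : ℕ, 3 ≤ m →
      V' m ≠ 0 ∧ (((m : ℤ) : WithBot ℤ) < maxdeg (V' m)) ∧ V' m ≠ U ^ m := by
  have key : ∀ m : ℕ, 3 ≤ m →
      co (V' m) (5 * (m : ℤ) - 3) = -1 ∧ ∀ n : ℤ, 5 * (m : ℤ) - 3 < n → co (V' m) n = 0 := by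
    intro m hm
    induction m, hm using Nat.le_induction with
    | base =>
      constructor
      · rw [hV3]; norm_num [co_Q3']
      · intro n hn
        rw [hV3, co_Q3']
        push_cast at hn
        repeat rw [if_neg (by omega)]
        ring
    | succ m hm ih =>
      obtain ⟨ih1, ih2⟩ := ih
      have hrec := hVrec m hm
      have hco : ∀ n : ℤ, co (V' (m + 1)) n =
          (co (V' m) (n - 5) - co (V' m) (n - 3) - co (V' m) (n + 3) + co (V' m) (n + 5)) -
          (co (U ^ (m+1)) (n - 5) - co (U ^ (m+1)) (n - 3) - co (U ^ (m+1)) (n - 1)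
            + co (U ^ (m+1)) (n + 1) - co (U ^ (m+1)) (n + 3) + co (U ^ (m+1)) (n + 5)) := by
        intro n
        have e1 : V' (m + 1) =
            (V' m * T 5 - V' m * T 3 - V' m * T (-3) + V' m * T (-5)) -
            (U ^ (m+1) * T 5 - U ^ (m+1) * T 3 - U ^ (m+1) * T 1 + U ^ (m+1) * T (-1)
              - U ^ (m+1) * T (-3) + U ^ (m+1) * T (-5)) := by
          rw [hrec]; ring
        rw [e1]
        simp only [co_sub, co_add, co_mul_T]
        norm_num
      have hU : ∀ n : ℤ, 5 * (m : ℤ) + 2 - 5 ≤ n → co (U ^ (m+1)) n = 0 := by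
        intro n hn
        apply co_Upow_eq_zero
        push_cast
        omega
      constructor
      · rw [hco]
        push_cast
        have e0 : 5 * ((m:ℤ) + 1) - 3 = (5 * (m:ℤ) - 3) + 5 := by ring
        rw [e0]
        rw [show (5 * (m:ℤ) - 3) + 5 - 5 = 5 * (m:ℤ) - 3 by ring, ih1]
        rw [ih2 _ (by omega), ih2 _ (by omega), ih2 _ (by omega)]
        rw [hU _ (by omega), hU _ (by omega), hU _ (by omega), hU _ (by omega),
          hU _ (by omega), hU _ (by omega)]
        ring
      · intro n hn
        push_cast at hn
        rw [hco]
        rw [ih2 _ (by omega), ih2 _ (by omega), ih2 _ (by omega), ih2 _ (by omega)]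
        rw [hU _ (by omega), hU _ (by omega), hU _ (by omega), hU _ (by omega),
          hU _ (by omega), hU _ (by omega)]
        ring
  intro m hm
  obtain ⟨h1, _⟩ := key m hm
  have hmem : (5 * (m : ℤ) - 3) ∈ (V' m).coeff.support :=
    mem_support_of_co_ne (by rw [h1]; norm_num)
  have hmax : ((5 * (m : ℤ) - 3 : ℤ) : WithBot ℤ) ≤ maxdeg (V' m) :=
    Finset.le_max hmem
  have hcast : ((m : ℤ) : WithBot ℤ) < ((5 * (m : ℤ) - 3 : ℤ) : WithBot ℤ) := by
    exact_mod_cast (by omega : (m : ℤ) < 5 * (m : ℤ) - 3)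
  refine ⟨?_, lt_of_lt_of_le hcast hmax, ?_⟩
  · intro h0
    rw [h0] at h1
    exact absurd h1 (by rw [co_zero]; norm_num)
  · apply ne_of_co_ne (n := 5 * (m : ℤ) - 3)
    rw [h1, co_Upow_eq_zero m _ (by omega)]
    norm_num
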